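/- Let n be an odd prime, a an integer with Legendre symbol (a/n) = −1, and consider the group T = Z/nZ ∪ {∞} with operation t1 * t2 = (t1·t2 + a)/(t1 + t2) (identity ∞). Then for every t in Z/nZ, (n+1)·t = ∞ in T, and consequently (n−1)·t + 2·t = ∞. -/

import Mathlib

/-- The operation on `T = Z/nZ ∪ {∞}` (with `∞ = none`) given by
`t₁ * t₂ = (t₁t₂ + a)/(t₁ + t₂)` when `t₁ + t₂ ≠ 0`, `∞` when `t₁ + t₂ = 0`,
and with `∞` as identity. -/
def Tmul {n : ℕ} [Fact n.Prime] (a : ZMod n) :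
    Option (ZMod n) → Option (ZMod n) → Option (ZMod n)
  | none, t => t
  | some t, none => some t
  | some t1, some t2 => if t1 + t2 = 0 then none else some ((t1 * t2 + a) / (t1 + t2))

/-- `Tpow a t k` is the `k`-fold product `t * t * ⋯ * t` in `(T, Tmul a)`,
with `Tpow a t 0 = ∞` the identity. -/
def Tpow {n : ℕ} [Fact n.Prime] (a : ZMod n) (t : Option (ZMod n)) : ℕ → Option (ZMod n)
  | 0 => none
  | k + 1 => Tmul a t (Tpow a t k)

/-- Let `n` be an odd prime and `a` an integer with Legendre symbol `(a/n) = -1`. In the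
group `T = Z/nZ ∪ {∞}` with operation `Tmul a`, every `t ∈ Z/nZ` satisfies
`(n+1)·t = ∞`, and consequently `(n-1)·t + 2·t = ∞`. -/
theorem Tpow_n_add_one (n : ℕ) [Fact n.Prime] (hn : Odd n)
    (a : ℤ) (hleg : legendreSym n a = -1) (t : ZMod n) :
    Tpow (a : ZMod n) (some t) (n + 1) = none ∧
    Tmul (a : ZMod n) (Tpow (a : ZMod n) (some t) (n - 1))
      (Tpow (a : ZMod n) (some t) 2) = none := by
  set a' : ZMod n := (a : ZMod n) with ha'
  have hnsq : ¬ IsSquare a' := (legendreSym.eq_neg_one_iff n).mp hleg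
  have ha0 : a' ≠ 0 := by rintro h; exact hnsq (h ▸ ⟨0, by simp⟩)
  have hirr : Irreducible (Polynomial.X ^ 2 - Polynomial.C a') := by
    apply X_pow_sub_C_irreducible_of_prime Nat.prime_two
    intro b hb
    exact hnsq ⟨b, by rw [← hb]; ring⟩
  haveI : Fact (Irreducible (Polynomial.X ^ 2 - Polynomial.C a')) := ⟨hirr⟩
  set K := AdjoinRoot (Polynomial.X ^ 2 - Polynomial.C a') with hK
  set s : K := AdjoinRoot.root _ with hs
  set f : ZMod n →+* K := algebraMap (ZMod n) K with hf
  have hfinj : Function.Injective f := f.injective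
  have hs2 : s ^ 2 = f a' := by
    have h := AdjoinRoot.eval₂_root (Polynomial.X ^ 2 - Polynomial.C a')
    rw [hf, AdjoinRoot.algebraMap_eq]
    simp only [Polynomial.eval₂_sub, Polynomial.eval₂_pow, Polynomial.eval₂_X,
      Polynomial.eval₂_C, sub_eq_zero] at h
    exact h
  have hsne : ∀ u : ZMod n, f u ≠ s ∧ f u ≠ -s := by
    intro u
    constructor
    · intro h
      exact hnsq ⟨u, hfinj (by rw [map_mul, h, ← sq, hs2])⟩
    · intro h
      exact hnsq ⟨-u, hfinj (by rw [map_mul, map_neg, h, neg_neg, ← sq, hs2])⟩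
  have hsub : ∀ u : ZMod n, f u - s ≠ 0 := by
    intro u h; exact (hsne u).1 (by linear_combination h)
  have hadd : ∀ u : ZMod n, f u + s ≠ 0 := by
    intro u h; exact (hsne u).2 (by linear_combination h)
  haveI : CharP K n := charP_of_injective_algebraMap hfinj n
  set φ : Option (ZMod n) → K := fun o => o.elim 1 (fun u => (f u + s) / (f u - s)) with hφ
  have hφs : ∀ u : ZMod n, φ (some u) = (f u + s) / (f u - s) := fun _ => rfl
  have hφn' : φ none = 1 := rfl
  have hφ_ne_one : ∀ u : ZMod n, φ (some u) ≠ 1 := by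
    intro u h
    rw [hφs, div_eq_one_iff_eq (hsub u)] at h
    have h2 : f 2 * s = 0 := by
      rw [map_ofNat]; linear_combination h
    have hsn0 : s ≠ 0 := by
      intro h0
      exact ha0 (hfinj (by rw [← hs2, h0, map_zero]; ring))
    have h2z : (2 : ZMod n) ≠ 0 := by
      intro hz
      have : (n : ℕ) ∣ 2 := by
        have := (ZMod.natCast_eq_zero_iff 2 n).mp (by exact_mod_cast hz)
        exact this
      have hp := (Fact.out : n.Prime)
      obtain ⟨m, hm⟩ := hn
      have := Nat.le_of_dvd (by norm_num) this
      have := hp.two_le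
      omega
    rcases mul_eq_zero.mp h2 with h | h
    · exact h2z (hfinj (by rw [h, map_zero]))
    · exact hsn0 h
  have hhom : ∀ x y : Option (ZMod n), φ (Tmul a' x y) = φ x * φ y := by
    rintro (_ | x) (_ | y)
    · show φ none = φ none * φ none; rw [hφn', mul_one]
    · show φ (some y) = 1 * φ (some y); rw [one_mul]
    · show φ (some x) = φ (some x) * 1; rw [mul_one]
    · by_cases hxy : x + y = 0
      · have hy : y = -x := by linear_combination hxy
        subst hy
        simp only [Tmul, if_pos hxy]
        rw [hφn', hφs, hφs, map_neg, div_mul_div_comm, eq_comm,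
          div_eq_one_iff_eq (mul_ne_zero (hsub x) ?_)]
        · ring
        · intro h; exact hadd x (by linear_combination -h)
      · simp only [Tmul, if_neg hxy]
        rw [hφs, hφs, hφs]
        have hxyK : f x + f y ≠ 0 := by
          rw [← map_add]; intro h; exact hxy (hfinj (by rw [h, map_zero]))
        have hu : f ((x * y + a') / (x + y)) = (f x * f y + f a') / (f x + f y) := by
          rw [map_div₀, map_add, map_mul, map_add]
        have hA : f x * f y + f a' - (f x + f y) * s ≠ 0 := by
          intro h
          have hz : (f x - s) * (f y - s) = 0 := by linear_combination h + hs2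
          rcases mul_eq_zero.mp hz with h' | h'
          · exact hsub x h'
          · exact hsub y h'
        rw [hu, div_add' _ _ _ hxyK, div_sub' hxyK,
          div_div_div_cancel_right₀ hxyK, div_mul_div_comm,
          div_eq_div_iff hA (mul_ne_zero (hsub x) (hsub y))]
        linear_combination ((f x + s) * (f y + s) - (f x - s) * (f y - s)) * hs2
  have hpow : ∀ k : ℕ, φ (Tpow a' (some t) k) = φ (some t) ^ k := by
    intro k
    induction k with
    | zero => rw [pow_zero]; exact hφn'
    | succ k ih =>
        rw [Tpow, hhom, ih]
        exact (mul_comm _ _).trans (pow_succ _ _).symm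
  have hft : ∀ u : ZMod n, (f u) ^ n = f u := by
    intro u; rw [← map_pow, ZMod.pow_card]
  have heuler : a' ^ (n / 2) = -1 := by
    have h := legendreSym.eq_pow n a
    rw [hleg] at h
    rw [ha']
    exact_mod_cast h.symm
  have hsn : s ^ n = -s := by
    obtain ⟨m, hm⟩ := hn
    calc s ^ n = (s ^ 2) ^ (n / 2) * s := by
          rw [← pow_mul, ← pow_succ]; congr 1; omega
    _ = f (a' ^ (n / 2)) * s := by rw [hs2, map_pow]
    _ = -s := by rw [heuler]; simp; ring
  have hφn : φ (some t) ^ (n + 1) = 1 := by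
    have h1 := hsub t
    have h2 := hadd t
    have hfrob : (f t + s) ^ n = f t - s := by
      rw [add_pow_char, hft, hsn]; ring
    have hfrob' : (f t - s) ^ n = f t + s := by
      have e : f t - s = f t + (-s) := by ring
      rw [e, add_pow_char, hft, Odd.neg_pow hn, hsn, neg_neg]
    have hps : φ (some t) ^ (n + 1) = φ (some t) ^ n * φ (some t) := pow_succ _ _
    rw [hps, hφs, div_pow, hfrob, hfrob', div_mul_div_comm,
      div_eq_one_iff_eq (mul_ne_zero h2 h1)]
    ring
  constructor
  · have h := hpow (n + 1)
    rw [hφn] at h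
    cases hc : Tpow a' (some t) (n + 1) with
    | none => rfl
    | some u => rw [hc] at h; exact absurd h (hφ_ne_one u)
  · have hn1 : 1 ≤ n := (Fact.out : n.Prime).two_le.trans' (by omega)
    have key : φ (Tmul a' (Tpow a' (some t) (n - 1)) (Tpow a' (some t) 2)) = 1 := by
      rw [hhom, hpow, hpow, ← pow_add]
      have h12 : n - 1 + 2 = n + 1 := by omega
      rw [h12, hφn]
    cases hc : Tmul a' (Tpow a' (some t) (n - 1)) (Tpow a' (some t) 2) with
    | none => rfl
    | some u => rw [hc] at key; exact absurd key (hφ_ne_one u)
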